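/- Let σ and σ̃ be nonnegative random variables with σ ≤_st σ̃, and let ε be a random variable independent of both σ and σ̃ with E[ε] = 0. Then σε ≤_cx σ̃ε (convex order). -/

import Mathlib

open MeasureTheory ProbabilityTheory Filter Topology

/-- Usual stochastic order. -/
def LeSt {Ω : Type*} [MeasurableSpace Ω] (μ : Measure Ω) (X Y : Ω → ℝ) : Prop :=
  ∀ φ : ℝ → ℝ, Monotone φ → Integrable (φ ∘ X) μ → Integrable (φ ∘ Y) μ →
    ∫ ω, φ (X ω) ∂μ ≤ ∫ ω, φ (Y ω) ∂μ

/-- Convex order. -/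
def LeCx {Ω : Type*} [MeasurableSpace Ω] (μ : Measure Ω) (X Y : Ω → ℝ) : Prop :=
  ∀ φ : ℝ → ℝ, ConvexOn ℝ Set.univ φ → Integrable (φ ∘ X) μ → Integrable (φ ∘ Y) μ →
    ∫ ω, φ (X ω) ∂μ ≤ ∫ ω, φ (Y ω) ∂μ

/-- A convex function on `ℝ` has a supporting line at `0`. -/
lemma exists_support_line (φ : ℝ → ℝ) (hφ : ConvexOn ℝ Set.univ φ) :
    ∃ c : ℝ, ∀ x : ℝ, φ 0 + c * x ≤ φ x := by
  set S : Set ℝ := (fun x => (φ 0 - φ x) / (0 - x)) '' Set.Iio 0 with hS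
  have hne : S.Nonempty := ⟨(φ 0 - φ (-1)) / (0 - (-1)), ⟨-1, by norm_num, rfl⟩⟩
  have hub : ∀ z > 0, ∀ y ∈ S, y ≤ (φ z - φ 0) / (z - 0) := by
    rintro z hz y ⟨x, hx, rfl⟩
    exact hφ.slope_mono_adjacent (Set.mem_univ x) (Set.mem_univ z) hx hz
  have hbdd : BddAbove S := ⟨(φ 1 - φ 0) / (1 - 0), fun y hy => hub 1 one_pos y hy⟩
  refine ⟨sSup S, fun x => ?_⟩
  rcases lt_trichotomy x 0 with hx | rfl | hx
  · have h1 : (φ 0 - φ x) / (0 - x) ≤ sSup S := le_csSup hbdd ⟨x, hx, rfl⟩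
    have h2 : 0 < 0 - x := by linarith
    rw [div_le_iff₀ h2] at h1
    nlinarith
  · simp
  · have h1 : sSup S ≤ (φ x - φ 0) / (x - 0) := csSup_le hne (hub x hx)
    rw [le_div_iff₀ (by linarith : (0:ℝ) < x - 0)] at h1
    nlinarith

/-- Downward transfer of integrability for `e ↦ φ (a * e)`. -/
lemma key_integrable {ν : Measure ℝ} [IsProbabilityMeasure ν]
    {φ : ℝ → ℝ} (hφ : ConvexOn ℝ Set.univ φ) (hφc : Continuous φ)
    (hid : Integrable id ν) {a b : ℝ} (ha : 0 ≤ a) (hab : a ≤ b)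
    (hb : Integrable (fun e => φ (b * e)) ν) :
    Integrable (fun e => φ (a * e)) ν := by
  rcases eq_or_lt_of_le (ha.trans hab) with hb0 | hb0
  · have haz : a = 0 := le_antisymm (hab.trans hb0.symm.le) ha
    subst haz
    simpa using integrable_const (φ 0) (μ := ν)
  · obtain ⟨c, hc⟩ := exists_support_line φ hφ
    set lam : ℝ := a / b with hlam
    have hlam0 : 0 ≤ lam := div_nonneg ha hb0.le
    have hlam1 : lam ≤ 1 := (div_le_one hb0).mpr hab
    have hab' : lam * b = a := div_mul_cancel₀ a hb0.ne'
    have hupper : ∀ e : ℝ, φ (a * e) ≤ lam * φ (b * e) + (1 - lam) * φ 0 := by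
      intro e
      have := hφ.2 (Set.mem_univ (b * e)) (Set.mem_univ 0) hlam0
        (sub_nonneg.mpr hlam1) (by ring)
      have heq : lam • (b * e) + (1 - lam) • (0:ℝ) = a * e := by
        rw [smul_eq_mul, smul_eq_mul, mul_zero, add_zero, ← mul_assoc, hab']
      rwa [heq, smul_eq_mul, smul_eq_mul] at this
    have hlower : ∀ e : ℝ, φ 0 + c * (a * e) ≤ φ (a * e) := fun e => hc _
    refine Integrable.mono'
      (g := fun e => lam * |φ (b * e)| + (1 - lam) * |φ 0| + (|φ 0| + |c * a| * |e|)) ?_ ?_ ?_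
    · refine (((hb.abs.const_mul lam).add (integrable_const _)).add
        ((integrable_const _).add ?_))
      exact (hid.abs.const_mul (|c * a|))
    · exact (hφc.comp (continuous_const.mul continuous_id)).aestronglyMeasurable
    · refine Filter.Eventually.of_forall fun e => ?_
      rw [Real.norm_eq_abs, abs_le]
      have h1 := hupper e
      have h2 := hlower e
      have h3 : φ (b * e) ≤ |φ (b * e)| := le_abs_self _
      have h4 : -|φ 0| ≤ φ 0 := neg_abs_le _
      have h5 : φ 0 ≤ |φ 0| := le_abs_self _
      have h6 : -(|c * a| * |e|) ≤ c * (a * e) := by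
        rw [← abs_mul, ← mul_assoc]; exact neg_abs_le _
      have h7 : lam * φ (b * e) ≤ lam * |φ (b * e)| := mul_le_mul_of_nonneg_left h3 hlam0
      have h8 : (1 - lam) * φ 0 ≤ (1 - lam) * |φ 0| :=
        mul_le_mul_of_nonneg_left h5 (by linarith)
      have h9 : (0:ℝ) ≤ |φ 0| := abs_nonneg _
      have h10 : (0:ℝ) ≤ |c * a| * |e| := mul_nonneg (abs_nonneg _) (abs_nonneg _)
      have h11 : (0:ℝ) ≤ lam * |φ (b * e)| := mul_nonneg hlam0 (abs_nonneg _)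
      have h12 : (0:ℝ) ≤ (1 - lam) * |φ 0| := mul_nonneg (by linarith) (abs_nonneg _)
      refine ⟨?_, ?_⟩
      · show -(lam * |φ (b * e)| + (1 - lam) * |φ 0| + (|φ 0| + |c * a| * |e|)) ≤ φ (a * e)
        linarith
      · show φ (a * e) ≤ lam * |φ (b * e)| + (1 - lam) * |φ 0| + (|φ 0| + |c * a| * |e|)
        linarith

/-- Jensen at zero: `φ 0 ≤ ∫ φ (b * e)` when `ε` has mean zero. -/
lemma jensen_zero {ν : Measure ℝ} [IsProbabilityMeasure ν]
    {φ : ℝ → ℝ} (hφ : ConvexOn ℝ Set.univ φ)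
    (hid : Integrable id ν) (hmean : ∫ e, e ∂ν = 0) {b : ℝ}
    (hb : Integrable (fun e => φ (b * e)) ν) :
    φ 0 ≤ ∫ e, φ (b * e) ∂ν := by
  obtain ⟨c, hc⟩ := exists_support_line φ hφ
  have hid' : Integrable (fun e : ℝ => e) ν := hid
  have h1 : ∫ e, (φ 0 + (c * b) * e) ∂ν = φ 0 := by
    rw [integral_add (integrable_const _) (hid'.const_mul (c * b)), integral_const]
    have : ∫ e, (c * b) * e ∂ν = (c * b) * ∫ e, e ∂ν := integral_const_mul _ _
    simp [this, hmean]
  calc φ 0 = ∫ e, (φ 0 + (c * b) * e) ∂ν := h1.symm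
    _ ≤ ∫ e, φ (b * e) ∂ν := by
        refine integral_mono ((integrable_const _).add (hid'.const_mul (c * b))) hb fun e => ?_
        have := hc (b * e)
        calc φ 0 + (c * b) * e = φ 0 + c * (b * e) := by ring
          _ ≤ φ (b * e) := this

/-- Monotonicity of `a ↦ ∫ φ (a * e)` on nonnegative reals. -/
lemma mono_scale {ν : Measure ℝ} [IsProbabilityMeasure ν]
    {φ : ℝ → ℝ} (hφ : ConvexOn ℝ Set.univ φ)
    (hid : Integrable id ν) (hmean : ∫ e, e ∂ν = 0) {a b : ℝ}
    (ha : 0 ≤ a) (hab : a ≤ b)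
    (hai : Integrable (fun e => φ (a * e)) ν)
    (hbi : Integrable (fun e => φ (b * e)) ν) :
    ∫ e, φ (a * e) ∂ν ≤ ∫ e, φ (b * e) ∂ν := by
  rcases eq_or_lt_of_le (ha.trans hab) with hb0 | hb0
  · have haz : a = 0 := le_antisymm (hab.trans hb0.symm.le) ha
    rw [haz, ← hb0]
  · set lam : ℝ := a / b with hlam
    have hlam0 : 0 ≤ lam := div_nonneg ha hb0.le
    have hlam1 : lam ≤ 1 := (div_le_one hb0).mpr hab
    have hab' : lam * b = a := div_mul_cancel₀ a hb0.ne'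
    have hupper : ∀ e : ℝ, φ (a * e) ≤ lam * φ (b * e) + (1 - lam) * φ 0 := by
      intro e
      have := hφ.2 (Set.mem_univ (b * e)) (Set.mem_univ 0) hlam0
        (sub_nonneg.mpr hlam1) (by ring)
      have heq : lam • (b * e) + (1 - lam) • (0:ℝ) = a * e := by
        rw [smul_eq_mul, smul_eq_mul, mul_zero, add_zero, ← mul_assoc, hab']
      rwa [heq, smul_eq_mul, smul_eq_mul] at this
    have hj : φ 0 ≤ ∫ e, φ (b * e) ∂ν := jensen_zero hφ hid hmean hbi
    calc ∫ e, φ (a * e) ∂ν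
        ≤ ∫ e, (lam * φ (b * e) + (1 - lam) * φ 0) ∂ν :=
          integral_mono hai ((hbi.const_mul lam).add (integrable_const _))
            fun e => hupper e
      _ = lam * ∫ e, φ (b * e) ∂ν + (1 - lam) * φ 0 := by
          rw [integral_add (hbi.const_mul lam) (integrable_const _), integral_const_mul,
            integral_const]
          simp
      _ ≤ lam * ∫ e, φ (b * e) ∂ν + (1 - lam) * ∫ e, φ (b * e) ∂ν := by
          have h1 : (0:ℝ) ≤ 1 - lam := by linarith
          nlinarith
      _ = ∫ e, φ (b * e) ∂ν := by ring

/-- Fubini bookkeeping for one factor. -/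
lemma fubini_pieces {Ω : Type*} [MeasurableSpace Ω] (μ : Measure Ω) [IsProbabilityMeasure μ]
    (X ε : Ω → ℝ) (hX : Measurable X) (hε : Measurable ε)
    (hindep : IndepFun X ε μ) {φ : ℝ → ℝ} (hφc : Continuous φ)
    (hint : Integrable (fun ω => φ (X ω * ε ω)) μ) :
    Integrable (fun ω => ∫ e, φ ((X ω) * e) ∂(Measure.map ε μ)) μ ∧
    (∫ ω, φ (X ω * ε ω) ∂μ = ∫ ω, (∫ e, φ ((X ω) * e) ∂(Measure.map ε μ)) ∂μ) ∧
    (∀ᵐ ω ∂μ, Integrable (fun e => φ ((X ω) * e)) (Measure.map ε μ)) := by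
  set ν := Measure.map ε μ with hν
  haveI : IsProbabilityMeasure ν := Measure.isProbabilityMeasure_map hε.aemeasurable
  haveI : IsProbabilityMeasure (μ.map X) := Measure.isProbabilityMeasure_map hX.aemeasurable
  have hmap : μ.map (fun ω => (X ω, ε ω)) = (μ.map X).prod ν :=
    (indepFun_iff_map_prod_eq_prod_map_map hX.aemeasurable hε.aemeasurable).mp hindep
  have hfm : StronglyMeasurable (fun p : ℝ × ℝ => φ (p.1 * p.2)) :=
    (hφc.comp (continuous_fst.mul continuous_snd)).stronglyMeasurable
  have hpair : AEMeasurable (fun ω => (X ω, ε ω)) μ := (hX.prodMk hε).aemeasurable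
  have h1 : Integrable (fun p : ℝ × ℝ => φ (p.1 * p.2)) ((μ.map X).prod ν) := by
    rw [← hmap]
    exact (integrable_map_measure hfm.aestronglyMeasurable hpair).mpr hint
  have hgm : StronglyMeasurable (fun s : ℝ => ∫ e, φ (s * e) ∂ν) :=
    hfm.integral_prod_right'
  refine ⟨?_, ?_, ?_⟩
  · have h2 : Integrable (fun s : ℝ => ∫ e, φ (s * e) ∂ν) (μ.map X) := h1.integral_prod_left
    exact (integrable_map_measure hgm.aestronglyMeasurable hX.aemeasurable).mp h2
  · calc ∫ ω, φ (X ω * ε ω) ∂μ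
        = ∫ p, φ (p.1 * p.2) ∂(μ.map (fun ω => (X ω, ε ω))) :=
          (integral_map hpair hfm.aestronglyMeasurable).symm
      _ = ∫ p, φ (p.1 * p.2) ∂((μ.map X).prod ν) := by rw [hmap]
      _ = ∫ s, ∫ e, φ (s * e) ∂ν ∂(μ.map X) := integral_prod _ h1
      _ = ∫ ω, ∫ e, φ (X ω * e) ∂ν ∂μ :=
          integral_map hX.aemeasurable hgm.aestronglyMeasurable
  · exact ae_of_ae_map hX.aemeasurable h1.prod_right_ae

lemma tendsto_min_integral {Ω : Type*} [MeasurableSpace Ω] {μ : Measure Ω} [IsFiniteMeasure μ]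
    {f : Ω → ℝ} (hf : Integrable f μ) :
    Tendsto (fun n : ℕ => ∫ ω, min (f ω) (n : ℝ) ∂μ) atTop (𝓝 (∫ ω, f ω ∂μ)) := by
  refine tendsto_integral_of_dominated_convergence (fun ω => |f ω|)
    (fun n => ?_) hf.abs (fun n => ?_) ?_
  · exact hf.1.aemeasurable.min aemeasurable_const |>.aestronglyMeasurable
  · refine Filter.Eventually.of_forall fun ω => ?_
    rw [Real.norm_eq_abs]
    rcases le_total (f ω) (n : ℝ) with h | h
    · rw [min_eq_left h]
    · rw [min_eq_right h, abs_of_nonneg (Nat.cast_nonneg n)]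
      exact h.trans (le_abs_self _)
  · refine Filter.Eventually.of_forall fun ω => ?_
    have hev : ∀ᶠ n : ℕ in atTop, min (f ω) (n : ℝ) = f ω := by
      filter_upwards [eventually_ge_atTop ⌈f ω⌉₊] with n hn
      exact min_eq_left ((Nat.le_ceil _).trans (Nat.cast_le.mpr hn))
    exact Tendsto.congr' (hev.mono fun n h => h.symm) tendsto_const_nhds

/-- if `σ, σ̃` are nonnegative with `σ ≤_st σ̃`, and `ε` is independent of both,
with `E[ε] = 0`, then `σε ≤_cx σ̃ε`. -/
theorem stmt4 {Ω : Type*} [MeasurableSpace Ω] (μ : Measure Ω) [IsProbabilityMeasure μ]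
    (σ σ' ε : Ω → ℝ)
    (hσmeas : Measurable σ) (hσ'meas : Measurable σ') (hεmeas : Measurable ε)
    (hσnn : ∀ ω, 0 ≤ σ ω) (hσ'nn : ∀ ω, 0 ≤ σ' ω)
    (hst : LeSt μ σ σ')
    (hindep : IndepFun σ ε μ) (hindep' : IndepFun σ' ε μ)
    (hεint : Integrable ε μ) (hεmean : ∫ ω, ε ω ∂μ = 0) :
    LeCx μ (fun ω => σ ω * ε ω) (fun ω => σ' ω * ε ω) := by
  classical
  intro φ hφ hint hint'
  have hφc : Continuous φ :=
    continuousOn_univ.mp (hφ.continuousOn isOpen_univ)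
  set ν := Measure.map ε μ with hν
  haveI : IsProbabilityMeasure ν := Measure.isProbabilityMeasure_map hεmeas.aemeasurable
  have hid : Integrable id ν := by
    rw [hν, integrable_map_measure aestronglyMeasurable_id hεmeas.aemeasurable]
    exact hεint
  have hmean : ∫ e, e ∂ν = 0 := by
    have h : ∫ e, id e ∂ν = ∫ ω, id (ε ω) ∂μ :=
      integral_map hεmeas.aemeasurable aestronglyMeasurable_id
    simpa using h.trans (by simpa using hεmean)
  have hint1 : Integrable (fun ω => φ (σ ω * ε ω)) μ := hint
  have hint2 : Integrable (fun ω => φ (σ' ω * ε ω)) μ := hint'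
  obtain ⟨hg1, he1, hB1⟩ := fubini_pieces μ σ ε hσmeas hεmeas hindep hφc hint1
  obtain ⟨hg2, he2, hB2⟩ := fubini_pieces μ σ' ε hσ'meas hεmeas hindep' hφc hint2
  set g : ℝ → ℝ := fun s => ∫ e, φ (s * e) ∂ν with hg
  set B : Set ℝ := {s | Integrable (fun e => φ (max s 0 * e)) ν} with hBdef
  have hBdown : ∀ s t : ℝ, s ≤ t → t ∈ B → s ∈ B := fun s t hstl ht =>
    key_integrable hφ hφc hid (le_max_right _ _) (max_le_max hstl le_rfl) ht
  have hgmonoB : ∀ s t : ℝ, s ≤ t → s ∈ B → t ∈ B → g (max s 0) ≤ g (max t 0) :=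
    fun s t h hs ht =>
      mono_scale hφ hid hmean (le_max_right _ _) (max_le_max h le_rfl) hs ht
  have hmem : ∀ᵐ ω ∂μ, σ ω ∈ B := hB1.mono fun ω h => by
    simpa [hBdef, max_eq_left (hσnn ω)] using h
  have hmem' : ∀ᵐ ω ∂μ, σ' ω ∈ B := hB2.mono fun ω h => by
    simpa [hBdef, max_eq_left (hσ'nn ω)] using h
  have key : ∀ n : ℕ, ∫ ω, min (g (σ ω)) (n : ℝ) ∂μ ≤ ∫ ω, min (g (σ' ω)) (n : ℝ) ∂μ := by
    intro n
    set gn : ℝ → ℝ := fun s => if s ∈ B then min (g (max s 0)) (n : ℝ) else (n : ℝ) with hgn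
    have hmono : Monotone gn := by
      intro s t hstl
      by_cases hs : s ∈ B
      · by_cases ht : t ∈ B
        · simp only [hgn, if_pos hs, if_pos ht]
          exact min_le_min (hgmonoB s t hstl hs ht) le_rfl
        · simp only [hgn, if_pos hs, if_neg ht]
          exact min_le_right _ _
      · have ht : t ∉ B := fun ht => hs (hBdown s t hstl ht)
        simp [hgn, hs, ht]
    have hae : ∀ᵐ ω ∂μ, gn (σ ω) = min (g (σ ω)) (n : ℝ) := hmem.mono fun ω h => by
      simp [hgn, h, max_eq_left (hσnn ω)]
    have hae' : ∀ᵐ ω ∂μ, gn (σ' ω) = min (g (σ' ω)) (n : ℝ) := hmem'.mono fun ω h => by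
      simp [hgn, h, max_eq_left (hσ'nn ω)]
    have hmin1 : Integrable (fun ω => min (g (σ ω)) (n : ℝ)) μ := by
      have h := hg1.inf (integrable_const (n : ℝ) (μ := μ))
      exact h
    have hmin2 : Integrable (fun ω => min (g (σ' ω)) (n : ℝ)) μ := by
      have h := hg2.inf (integrable_const (n : ℝ) (μ := μ))
      exact h
    have hcint1 : Integrable (gn ∘ σ) μ := hmin1.congr (hae.mono fun ω h => h.symm)
    have hcint2 : Integrable (gn ∘ σ') μ := hmin2.congr (hae'.mono fun ω h => h.symm)
    have := hst gn hmono hcint1 hcint2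
    calc ∫ ω, min (g (σ ω)) (n : ℝ) ∂μ
        = ∫ ω, gn (σ ω) ∂μ := (integral_congr_ae hae).symm
      _ ≤ ∫ ω, gn (σ' ω) ∂μ := this
      _ = ∫ ω, min (g (σ' ω)) (n : ℝ) ∂μ := integral_congr_ae hae'
  have ht1 : Tendsto (fun n : ℕ => ∫ ω, min (g (σ ω)) (n : ℝ) ∂μ) atTop
      (𝓝 (∫ ω, g (σ ω) ∂μ)) := tendsto_min_integral hg1
  have ht2 : Tendsto (fun n : ℕ => ∫ ω, min (g (σ' ω)) (n : ℝ) ∂μ) atTop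
      (𝓝 (∫ ω, g (σ' ω) ∂μ)) := tendsto_min_integral hg2
  have hfinal : ∫ ω, g (σ ω) ∂μ ≤ ∫ ω, g (σ' ω) ∂μ :=
    le_of_tendsto_of_tendsto' ht1 ht2 key
  calc ∫ ω, (φ ∘ fun ω => σ ω * ε ω) ω ∂μ = ∫ ω, g (σ ω) ∂μ := he1
    _ ≤ ∫ ω, g (σ' ω) ∂μ := hfinal
    _ = ∫ ω, (φ ∘ fun ω => σ' ω * ε ω) ω ∂μ := he2.symm
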